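/- For any MAC W : X1 × X2 → Y on finite alphabets and all positive integers ℓ1, k1, ℓ2, k2: min( (k1/ℓ1)(1 − (1 − 1/k1)^{ℓ1}), (k2/ℓ2)(1 − (1 − 1/k2)^{ℓ2}) ) · S_sum^{NS_SR}(W,k1,k2) ≤ S_sum(W,ℓ1,ℓ2). -/

import Mathlib

open Finset


private lemma binom_aux (n : ℕ) (r : ℝ) :
    (∑ j ∈ Finset.range (n + 1),
        (n.choose j : ℝ) * (r ^ j * (1 - r) ^ (n - j) * ((j : ℝ) + 1)⁻¹)) * (((n : ℝ) + 1) * r)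
      = 1 - (1 - r) ^ (n + 1) := by
  rw [Finset.sum_mul]
  have h1 : ∀ j ∈ Finset.range (n + 1),
      (n.choose j : ℝ) * (r ^ j * (1 - r) ^ (n - j) * ((j : ℝ) + 1)⁻¹) * (((n : ℝ) + 1) * r)
        = r ^ (j + 1) * (1 - r) ^ (n - j) * ((n + 1).choose (j + 1) : ℝ) := by
    intro j _
    have hc : ((n : ℝ) + 1) * (n.choose j : ℝ) = ((n + 1).choose (j + 1) : ℝ) * ((j : ℝ) + 1) := by
      exact_mod_cast congrArg (fun m : ℕ => (m : ℝ)) (Nat.add_one_mul_choose_eq n j)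
    have hj1 : ((j : ℝ) + 1) ≠ 0 := by positivity
    field_simp
    linear_combination (r ^ j * (1 - r) ^ (n - j) * r) * hc
  rw [Finset.sum_congr rfl h1]
  have h2 := add_pow r (1 - r) (n + 1)
  have hr1 : r + (1 - r) = 1 := by ring
  rw [hr1, one_pow] at h2
  rw [Finset.sum_range_succ'] at h2
  simp only [Nat.succ_sub_succ, pow_zero, Nat.choose_zero_right, Nat.cast_one, mul_one, one_mul,
    Nat.sub_zero] at h2
  linarith [h2]

section OneSender

variable {X : Type*} [Fintype X] [DecidableEq X]

/-- Decoder built from shared codebook acceptance values `Q m`. -/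
noncomputable def Dec (n : ℕ) (Q : Fin (n + 1) → ℝ) (m : Fin (n + 1)) : ℝ :=
  ∑ S ∈ (univ : Finset (Fin (n + 1))).powerset,
    ((∏ m' ∈ S, Q m') * ∏ m' ∈ univ \ S, (1 - Q m')) *
      (if m ∈ S then ((S.card : ℝ))⁻¹ else if S = ∅ then ((n : ℝ) + 1)⁻¹ else 0)

lemma Dec_nonneg {n : ℕ} {Q : Fin (n + 1) → ℝ} (hQ0 : ∀ m, 0 ≤ Q m) (hQ1 : ∀ m, Q m ≤ 1)
    (m : Fin (n + 1)) : 0 ≤ Dec n Q m := by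
  refine Finset.sum_nonneg fun S _ => mul_nonneg (mul_nonneg
    (Finset.prod_nonneg fun i _ => hQ0 i)
    (Finset.prod_nonneg fun i _ => by linarith [hQ1 i])) ?_
  split_ifs <;> positivity

lemma Dec_sum {n : ℕ} (Q : Fin (n + 1) → ℝ) : ∑ m, Dec n Q m = 1 := by
  unfold Dec
  rw [Finset.sum_comm]
  have h1 : ∀ S ∈ (univ : Finset (Fin (n + 1))).powerset,
      (∑ m, ((∏ m' ∈ S, Q m') * ∏ m' ∈ univ \ S, (1 - Q m')) *
        (if m ∈ S then ((S.card : ℝ))⁻¹ else if S = ∅ then ((n : ℝ) + 1)⁻¹ else 0))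
      = (∏ m' ∈ S, Q m') * ∏ m' ∈ univ \ S, (1 - Q m') := by
    intro S _
    rw [← Finset.mul_sum]
    have hco : (∑ m : Fin (n + 1),
        (if m ∈ S then ((S.card : ℝ))⁻¹ else if S = ∅ then ((n : ℝ) + 1)⁻¹ else 0)) = 1 := by
      rcases eq_or_ne S ∅ with rfl | hS
      · simp only [Finset.notMem_empty, if_false, if_pos rfl, Finset.sum_const,
          Finset.card_univ, Fintype.card_fin, nsmul_eq_mul, if_true]
        push_cast
        rw [mul_inv_cancel₀ (by positivity)]
      · simp only [if_neg hS]
        rw [Finset.sum_ite_mem, Finset.univ_inter, Finset.sum_const, nsmul_eq_mul]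
        rw [mul_inv_cancel₀]
        have hcne : S.card ≠ 0 := Finset.card_ne_zero.2 (Finset.nonempty_of_ne_empty hS)
        exact Nat.cast_ne_zero.2 hcne
    rw [hco, mul_one]
  rw [Finset.sum_congr rfl h1, ← Finset.prod_add]
  simp
lemma sum_fn_prod {X : Type*} [Fintype X] {n : ℕ} (g : Fin (n + 1) → X → ℝ) :
    ∑ c : Fin (n + 1) → X, ∏ m, g m (c m) = ∏ m, ∑ x, g m x :=
  (Fintype.prod_sum (fun m x => g m x)).symm

lemma enc_exp {X : Type*} [Fintype X] [DecidableEq X] {n : ℕ} (p : X → ℝ)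
    (hp1 : ∑ x, p x = 1) (m : Fin (n + 1)) (x : X) :
    ∑ c : Fin (n + 1) → X, (∏ m', p (c m')) * (if c m = x then 1 else 0) = p x := by
  have h1 : ∀ c : Fin (n + 1) → X, (∏ m', p (c m')) * (if c m = x then 1 else 0)
      = ∏ m', (p (c m') * (if m' = m then (if c m' = x then 1 else 0) else 1)) := by
    intro c
    rw [Finset.prod_mul_distrib]
    congr 1
    rw [Finset.prod_ite_eq' univ m (fun m' => if c m' = x then 1 else 0)]
    simp
  rw [Finset.sum_congr rfl fun c _ => h1 c,
    sum_fn_prod (fun m' t => p t * (if m' = m then (if t = x then 1 else 0) else 1))]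
  rw [← Finset.mul_prod_erase univ
    (fun m' => ∑ t, p t * (if m' = m then (if t = x then 1 else 0) else 1)) (mem_univ m)]
  have h2 : (∏ m' ∈ univ.erase m,
      ∑ t, p t * (if m' = m then (if t = x then 1 else 0) else 1)) = 1 := by
    apply Finset.prod_eq_one
    intro m' hm'
    have hne : m' ≠ m := (Finset.mem_erase.1 hm').1
    simp [hne, hp1]
  rw [h2, mul_one]
  simp [mul_ite]
lemma key_m {X : Type*} [Fintype X] [DecidableEq X] {n : ℕ} (k : ℕ) (hk : 0 < k)
    (p q : X → ℝ) (hp0 : ∀ x, 0 ≤ p x) (hp1 : ∑ x, p x = 1)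
    (hq0 : ∀ x, 0 ≤ q x) (hq1 : ∀ x, q x ≤ 1)
    (hpq : ∑ x, p x * q x = 1 / k)
    (m : Fin (n + 1)) (x : X) :
    (k : ℝ) / ((n : ℝ) + 1) * (1 - (1 - 1 / (k : ℝ)) ^ (n + 1)) * (p x * q x) ≤
      ∑ c : Fin (n + 1) → X,
        (∏ m', p (c m')) * ((if c m = x then 1 else 0) * Dec n (fun m' => q (c m')) m) := by
  have hk0 : (0 : ℝ) < k := by exact_mod_cast hk
  set r : ℝ := 1 / (k : ℝ) with hr
  have hr0 : 0 < r := by positivity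
  -- Step A : rewrite the expectation as a sum over subsets
  have hA : (∑ c : Fin (n + 1) → X,
        (∏ m', p (c m')) * ((if c m = x then 1 else 0) * Dec n (fun m' => q (c m')) m))
      = ∑ S ∈ (univ : Finset (Fin (n + 1))).powerset,
          (if m ∈ S then ((S.card : ℝ))⁻¹ else if S = ∅ then ((n : ℝ) + 1)⁻¹ else 0) *
          ∏ m', ∑ t, p t * (if m' = m then (if t = x then 1 else 0) else 1) *
            (if m' ∈ S then q t else 1 - q t) := by
    have hc : ∀ c : Fin (n + 1) → X,
        (∏ m', p (c m')) * ((if c m = x then 1 else 0) * Dec n (fun m' => q (c m')) m)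
        = ∑ S ∈ (univ : Finset (Fin (n + 1))).powerset,
            (if m ∈ S then ((S.card : ℝ))⁻¹ else if S = ∅ then ((n : ℝ) + 1)⁻¹ else 0) *
            ∏ m', (p (c m') * (if m' = m then (if c m' = x then 1 else 0) else 1) *
              (if m' ∈ S then q (c m') else 1 - q (c m'))) := by
      intro c
      unfold Dec
      rw [Finset.mul_sum, Finset.mul_sum]
      refine Finset.sum_congr rfl fun S hS => ?_
      have hSsub : S ⊆ univ := Finset.mem_powerset.1 hS
      have hprod : (∏ m', (p (c m') * (if m' = m then (if c m' = x then 1 else 0) else 1) *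
              (if m' ∈ S then q (c m') else 1 - q (c m'))))
          = (∏ m', p (c m')) * (if c m = x then 1 else 0) *
            ((∏ m' ∈ S, q (c m')) * ∏ m' ∈ univ \ S, (1 - q (c m'))) := by
        rw [Finset.prod_mul_distrib, Finset.prod_mul_distrib]
        congr 1
        · congr 1
          rw [Finset.prod_ite_eq' univ m (fun m' => if c m' = x then 1 else 0)]
          simp
        · rw [← Finset.prod_sdiff hSsub]
          rw [mul_comm (∏ m' ∈ univ \ S, if m' ∈ S then q (c m') else 1 - q (c m'))
            (∏ m' ∈ S, if m' ∈ S then q (c m') else 1 - q (c m'))]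
          congr 1
          · exact Finset.prod_congr rfl fun i hi => if_pos hi
          · exact Finset.prod_congr rfl fun i hi => if_neg (Finset.mem_sdiff.1 hi).2
      rw [hprod]
      ring
    rw [Finset.sum_congr rfl fun c _ => hc c, Finset.sum_comm]
    refine Finset.sum_congr rfl fun S hS => ?_
    rw [← Finset.mul_sum,
      sum_fn_prod (fun m' t => p t * (if m' = m then (if t = x then 1 else 0) else 1) *
        (if m' ∈ S then q t else 1 - q t))]
  rw [hA]
  -- Step B : split off the subsets containing m
  have hins : insert m ((univ : Finset (Fin (n + 1))).erase m) = univ :=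
    Finset.insert_erase (mem_univ m)
  have hsplit : ∀ f : Finset (Fin (n + 1)) → ℝ,
      (∑ S ∈ (univ : Finset (Fin (n + 1))).powerset, f S)
      = (∑ T ∈ ((univ : Finset (Fin (n + 1))).erase m).powerset, f T)
        + ∑ T ∈ ((univ : Finset (Fin (n + 1))).erase m).powerset, f (insert m T) := by
    intro f
    conv_lhs => rw [← hins]
    exact Finset.sum_powerset_insert (Finset.notMem_erase m univ) f
  rw [hsplit]
  have hcard_erase : ((univ : Finset (Fin (n + 1))).erase m).card = n := by
    rw [Finset.card_erase_of_mem (mem_univ m), Finset.card_univ, Fintype.card_fin]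
    omega
  -- nonnegativity of the first part
  have hA0 : 0 ≤ ∑ T ∈ ((univ : Finset (Fin (n + 1))).erase m).powerset,
      (if m ∈ T then ((T.card : ℝ))⁻¹ else if T = ∅ then ((n : ℝ) + 1)⁻¹ else 0) *
      ∏ m', ∑ t, p t * (if m' = m then (if t = x then 1 else 0) else 1) *
        (if m' ∈ T then q t else 1 - q t) := by
    refine Finset.sum_nonneg fun T _ => mul_nonneg ?_ ?_
    · split_ifs <;> positivity
    · refine Finset.prod_nonneg fun m' _ => Finset.sum_nonneg fun t _ => ?_
      refine mul_nonneg (mul_nonneg (hp0 t) ?_) ?_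
      · split_ifs <;> norm_num
      · split_ifs
        · exact hq0 t
        · linarith [hq1 t]
  -- exact evaluation of the second part
  have hB : (∑ T ∈ ((univ : Finset (Fin (n + 1))).erase m).powerset,
      (if m ∈ insert m T then (((insert m T).card : ℝ))⁻¹
        else if insert m T = ∅ then ((n : ℝ) + 1)⁻¹ else 0) *
      ∏ m', ∑ t, p t * (if m' = m then (if t = x then 1 else 0) else 1) *
        (if m' ∈ insert m T then q t else 1 - q t))
      = (k : ℝ) / ((n : ℝ) + 1) * (1 - (1 - r) ^ (n + 1)) * (p x * q x) := by
    have hterm : ∀ T ∈ ((univ : Finset (Fin (n + 1))).erase m).powerset,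
        (if m ∈ insert m T then (((insert m T).card : ℝ))⁻¹
          else if insert m T = ∅ then ((n : ℝ) + 1)⁻¹ else 0) *
        (∏ m', ∑ t, p t * (if m' = m then (if t = x then 1 else 0) else 1) *
          (if m' ∈ insert m T then q t else 1 - q t))
        = ((T.card : ℝ) + 1)⁻¹ * (p x * q x * (r ^ T.card * (1 - r) ^ (n - T.card))) := by
      intro T hT
      have hTsub : T ⊆ (univ : Finset (Fin (n + 1))).erase m := Finset.mem_powerset.1 hT
      have hmT : m ∉ T := fun h => (Finset.mem_erase.1 (hTsub h)).1 rfl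
      have hcoef : (if m ∈ insert m T then (((insert m T).card : ℝ))⁻¹
          else if insert m T = ∅ then ((n : ℝ) + 1)⁻¹ else 0) = ((T.card : ℝ) + 1)⁻¹ := by
        rw [if_pos (Finset.mem_insert_self m T), Finset.card_insert_of_notMem hmT]
        push_cast
        ring_nf
      have hGm : (∑ t, p t * (if (m : Fin (n + 1)) = m then (if t = x then 1 else 0) else 1) *
          (if m ∈ insert m T then q t else 1 - q t)) = p x * q x := by
        simp only [if_pos rfl, Finset.mem_insert_self, if_true, mul_ite, ite_mul,
          mul_one, mul_zero, zero_mul, one_mul]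
        simp [Finset.sum_ite_eq']
      have hGrest : (∏ m' ∈ univ.erase m,
          ∑ t, p t * (if m' = m then (if t = x then 1 else 0) else 1) *
            (if m' ∈ insert m T then q t else 1 - q t))
          = r ^ T.card * (1 - r) ^ (n - T.card) := by
        have hco : ∀ m' ∈ univ.erase m,
            (∑ t, p t * (if m' = m then (if t = x then 1 else 0) else 1) *
              (if m' ∈ insert m T then q t else 1 - q t))
            = (if m' ∈ T then r else 1 - r) := by
          intro m' hm'
          have hne : m' ≠ m := (Finset.mem_erase.1 hm').1
          have hmem : (m' ∈ insert m T) = (m' ∈ T) := by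
            simp [Finset.mem_insert, hne]
          simp only [if_neg hne, mul_one, hmem]
          by_cases hmT' : m' ∈ T
          · simp only [if_pos hmT']
            exact hpq
          · simp only [if_neg hmT']
            have : ∀ t, p t * (1 - q t) = p t - p t * q t := fun t => by ring
            rw [Finset.sum_congr rfl fun t _ => this t, Finset.sum_sub_distrib, hp1, hpq]
        rw [Finset.prod_congr rfl hco, ← Finset.prod_sdiff hTsub]
        rw [Finset.prod_congr rfl (fun i hi => if_neg (Finset.mem_sdiff.1 hi).2),
          Finset.prod_congr rfl (fun i (hi : i ∈ T) => if_pos hi),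
          Finset.prod_const, Finset.prod_const, Finset.card_sdiff_of_subset hTsub, hcard_erase]
        ring
      rw [hcoef, ← Finset.mul_prod_erase univ _ (mem_univ m), hGm, hGrest]
    rw [Finset.sum_congr rfl hterm]
    have happ := Finset.sum_powerset_apply_card
      (fun j => ((j : ℝ) + 1)⁻¹ * (p x * q x * (r ^ j * (1 - r) ^ (n - j))))
      (x := (univ : Finset (Fin (n + 1))).erase m)
    rw [happ, hcard_erase]
    have hbin := binom_aux n r
    have hrne : ((n : ℝ) + 1) * r ≠ 0 := by positivity
    have hSig : (∑ j ∈ Finset.range (n + 1),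
        (n.choose j : ℝ) * (r ^ j * (1 - r) ^ (n - j) * ((j : ℝ) + 1)⁻¹))
        = (1 - (1 - r) ^ (n + 1)) / (((n : ℝ) + 1) * r) := by
      rw [eq_div_iff hrne]; exact hbin
    have : (∑ j ∈ Finset.range (n + 1), (n.choose j) •
        (((j : ℝ) + 1)⁻¹ * (p x * q x * (r ^ j * (1 - r) ^ (n - j)))))
        = (p x * q x) * ∑ j ∈ Finset.range (n + 1),
          (n.choose j : ℝ) * (r ^ j * (1 - r) ^ (n - j) * ((j : ℝ) + 1)⁻¹) := by
      rw [Finset.mul_sum]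
      exact Finset.sum_congr rfl fun j _ => by rw [nsmul_eq_mul]; ring
    rw [this, hSig]
    have hrk : r = 1 / (k : ℝ) := hr
    have hn1 : ((n : ℝ) + 1) ≠ 0 := by positivity
    have h2 : (1 - (1 - r) ^ (n + 1)) / (((n : ℝ) + 1) * r)
        = (k : ℝ) / ((n : ℝ) + 1) * (1 - (1 - r) ^ (n + 1)) := by
      rw [hrk]
      generalize (1 - (1 - 1 / (k : ℝ)) ^ (n + 1)) = X
      field_simp
      try ring
    rw [h2]
    ring
  rw [hB]
  linarith [hA0]
end OneSender

section Rearrange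

lemma sum_comm3 {A B C : Type*} [Fintype A] [Fintype B] [Fintype C] (f : A → B → C → ℝ) :
    ∑ a, ∑ b, ∑ c, f a b c = ∑ b, ∑ c, ∑ a, f a b c := by
  rw [Finset.sum_comm]
  exact Finset.sum_congr rfl fun b _ => Finset.sum_comm

lemma sum_comm4 {A B C D : Type*} [Fintype A] [Fintype B] [Fintype C] [Fintype D]
    (f : A → B → C → D → ℝ) :
    ∑ a, ∑ b, ∑ c, ∑ d, f a b c d = ∑ b, ∑ c, ∑ d, ∑ a, f a b c d := by
  rw [Finset.sum_comm]
  exact Finset.sum_congr rfl fun b _ => sum_comm3 fun a c d => f a b c d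

lemma sum5 {I1 I2 X1 X2 Y : Type*} [Fintype I1] [Fintype I2] [Fintype X1] [Fintype X2] [Fintype Y]
    (f : X1 → X2 → Y → ℝ) (a : I1 → X1 → Y → ℝ) (b : I2 → X2 → Y → ℝ) :
    ∑ i1 : I1, ∑ i2 : I2, ∑ x1, ∑ x2, ∑ y, f x1 x2 y * (a i1 x1 y * b i2 x2 y)
      = ∑ x1, ∑ x2, ∑ y, f x1 x2 y * ((∑ i1, a i1 x1 y) * (∑ i2, b i2 x2 y)) := by
  rw [sum_comm4 (fun i1 i2 x1 x2 => ∑ y, f x1 x2 y * (a i1 x1 y * b i2 x2 y))]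
  rw [sum_comm4 (fun i2 x1 x2 i1 => ∑ y, f x1 x2 y * (a i1 x1 y * b i2 x2 y))]
  refine Finset.sum_congr rfl fun x1 _ => Finset.sum_congr rfl fun x2 _ => ?_
  rw [sum_comm3 (fun i1 i2 y => f x1 x2 y * (a i1 x1 y * b i2 x2 y))]
  rw [sum_comm3 (fun i2 y i1 => f x1 x2 y * (a i1 x1 y * b i2 x2 y))]
  refine Finset.sum_congr rfl fun y _ => ?_
  calc ∑ i1, ∑ i2, f x1 x2 y * (a i1 x1 y * b i2 x2 y)
      = ∑ i1, ∑ i2, (f x1 x2 y * a i1 x1 y) * b i2 x2 y :=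
        Finset.sum_congr rfl fun i1 _ => Finset.sum_congr rfl fun i2 _ => by ring
    _ = (∑ i1, f x1 x2 y * a i1 x1 y) * ∑ i2, b i2 x2 y := by
        rw [Finset.sum_mul_sum]
    _ = f x1 x2 y * ((∑ i1, a i1 x1 y) * (∑ i2, b i2 x2 y)) := by
        rw [← Finset.mul_sum]; ring

lemma sumE {C1 C2 X1 X2 Y : Type*} [Fintype C1] [Fintype C2] [Fintype X1] [Fintype X2]
    [Fintype Y] (w1 : C1 → ℝ) (w2 : C2 → ℝ) (f : X1 → X2 → Y → ℝ)
    (A : C1 → X1 → Y → ℝ) (B : C2 → X2 → Y → ℝ) :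
    (∑ c1, ∑ c2, w1 c1 * w2 c2 * (∑ x1, ∑ x2, ∑ y, f x1 x2 y * (A c1 x1 y * B c2 x2 y)))
      = ∑ x1, ∑ x2, ∑ y, f x1 x2 y *
          ((∑ c1, w1 c1 * A c1 x1 y) * (∑ c2, w2 c2 * B c2 x2 y)) := by
  have h1 : ∀ c1 c2, w1 c1 * w2 c2 * (∑ x1, ∑ x2, ∑ y, f x1 x2 y * (A c1 x1 y * B c2 x2 y))
      = ∑ x1, ∑ x2, ∑ y, f x1 x2 y * ((w1 c1 * A c1 x1 y) * (w2 c2 * B c2 x2 y)) := by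
    intro c1 c2
    rw [Finset.mul_sum]
    refine Finset.sum_congr rfl fun x1 _ => ?_
    rw [Finset.mul_sum]
    refine Finset.sum_congr rfl fun x2 _ => ?_
    rw [Finset.mul_sum]
    exact Finset.sum_congr rfl fun y _ => by ring
  rw [Finset.sum_congr rfl fun c1 _ => Finset.sum_congr rfl fun c2 _ => h1 c1 c2]
  exact sum5 f (fun c1 x1 y => w1 c1 * A c1 x1 y) (fun c2 x2 y => w2 c2 * B c2 x2 y)

lemma exists_ge_of_le_wsum {ι : Type*} [Fintype ι] (w v : ι → ℝ) (hw0 : ∀ i, 0 ≤ w i)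
    (hw1 : ∑ i, w i = 1) (t : ℝ) (h : t ≤ ∑ i, w i * v i) : ∃ i, t ≤ v i := by
  by_contra hcon
  push_neg at hcon
  obtain ⟨i0, hi0⟩ : ∃ i : ι, w i ≠ 0 := by
    by_contra hall
    push_neg at hall
    rw [Finset.sum_congr rfl fun i _ => hall i] at hw1
    simp at hw1
  have hi0pos : 0 < w i0 := lt_of_le_of_ne (hw0 i0) (Ne.symm hi0)
  have hlt : ∑ i, w i * v i < ∑ i, w i * t := by
    refine Finset.sum_lt_sum (fun i _ => ?_) ⟨i0, Finset.mem_univ i0, ?_⟩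
    · exact mul_le_mul_of_nonneg_left (le_of_lt (hcon i)) (hw0 i)
    · exact mul_lt_mul_of_pos_left (hcon i0) hi0pos
  rw [← Finset.sum_mul, hw1, one_mul] at hlt
  linarith

end Rearrange

section Pack

lemma sender_pack {X Y : Type*} [Fintype X] [Fintype Y] [DecidableEq X] [Nonempty Y]
    {k : ℕ} (hk : 0 < k) (P : X → Fin k → Fin k → Y → ℝ)
    (hP0 : ∀ x j i y, 0 ≤ P x j i y)
    (hP1 : ∀ i y, ∑ x, ∑ j, P x j i y = 1)
    (hP3 : ∀ j i i' y, ∑ x, P x j i y = ∑ x, P x j i' y)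
    (hP4 : ∀ x i y y', ∑ j, P x j i y = ∑ j, P x j i y')
    (n : ℕ) :
    ∃ (p : X → ℝ) (z : X → Y → ℝ) (d : (Fin (n + 1) → X) → Y → Fin (n + 1) → ℝ),
      (∀ x, 0 ≤ p x) ∧ (∑ x, p x = 1) ∧ (∀ x y, 0 ≤ z x y) ∧
      (∀ x y, ∑ i, P x i i y = (k : ℝ) * z x y) ∧
      (∀ x y, ∑ i, ∑ j, P x j i y = (k : ℝ) * p x) ∧
      (∀ c y m, 0 ≤ d c y m) ∧
      (∀ c y, ∑ m, d c y m = 1) ∧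
      (∀ x y (m : Fin (n + 1)),
        (k : ℝ) / ((n : ℝ) + 1) * (1 - (1 - 1 / (k : ℝ)) ^ (n + 1)) * z x y ≤
          ∑ c : Fin (n + 1) → X,
            (∏ m', p (c m')) * ((if c m = x then 1 else 0) * d c y m)) := by
  have hk0 : (0 : ℝ) < k := by exact_mod_cast hk
  set y0 : Y := Classical.arbitrary Y
  set i0 : Fin k := ⟨0, hk⟩
  set p : X → ℝ := fun x => (1 / (k : ℝ)) * ∑ i, ∑ j, P x j i y0 with hpdef
  set z : X → Y → ℝ := fun x y => (1 / (k : ℝ)) * ∑ i, P x i i y with hzdef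
  have hp0 : ∀ x, 0 ≤ p x := fun x => by
    refine mul_nonneg (by positivity) (Finset.sum_nonneg fun i _ =>
      Finset.sum_nonneg fun j _ => hP0 x j i y0)
  have hz0 : ∀ x y, 0 ≤ z x y := fun x y =>
    mul_nonneg (by positivity) (Finset.sum_nonneg fun i _ => hP0 x i i y)
  have hGy : ∀ x y, (∑ i, ∑ j, P x j i y) = ∑ i, ∑ j, P x j i y0 := fun x y =>
    Finset.sum_congr rfl fun i _ => hP4 x i y y0
  have hzval : ∀ x y, ∑ i, P x i i y = (k : ℝ) * z x y := fun x y => by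
    rw [hzdef]; field_simp
  have hpval : ∀ x y, ∑ i, ∑ j, P x j i y = (k : ℝ) * p x := fun x y => by
    rw [hpdef, hGy x y]; field_simp
  have hzp : ∀ x y, z x y ≤ p x := by
    intro x y
    rw [hzdef, hpdef]
    refine mul_le_mul_of_nonneg_left ?_ (by positivity)
    rw [← hGy x y]
    exact Finset.sum_le_sum fun i _ =>
      Finset.single_le_sum (f := fun j => P x j i y) (fun j _ => hP0 x j i y) (mem_univ i)
  have hp1 : ∑ x, p x = 1 := by
    rw [hpdef]
    simp only []
    rw [← Finset.mul_sum, Finset.sum_comm]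
    rw [Finset.sum_congr rfl fun i (_ : i ∈ univ) => hP1 i y0]
    simp [Finset.card_univ]
    field_simp
  have hzs : ∀ y, ∑ x, z x y = 1 / (k : ℝ) := by
    intro y
    rw [hzdef]
    simp only []
    rw [← Finset.mul_sum, Finset.sum_comm]
    rw [Finset.sum_congr rfl fun i (_ : i ∈ univ) => hP3 i i i0 y, Finset.sum_comm]
    rw [hP1 i0 y, mul_one]
  set q : X → Y → ℝ := fun x y => if p x = 0 then 0 else z x y / p x with hqdef
  have hppos : ∀ x, p x ≠ 0 → 0 < p x := fun x h => lt_of_le_of_ne (hp0 x) (Ne.symm h)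
  have hq0 : ∀ x y, 0 ≤ q x y := by
    intro x y
    rw [hqdef]
    dsimp only
    split_ifs with h
    · exact le_refl 0
    · exact div_nonneg (hz0 x y) (hp0 x)
  have hq1 : ∀ x y, q x y ≤ 1 := by
    intro x y
    rw [hqdef]
    dsimp only
    split_ifs with h
    · norm_num
    · exact (div_le_one (hppos x h)).2 (hzp x y)
  have hpq : ∀ x y, p x * q x y = z x y := by
    intro x y
    rw [hqdef]
    dsimp only
    split_ifs with h
    · have h1 : z x y ≤ 0 := h ▸ hzp x y
      have h2 := hz0 x y
      rw [h, zero_mul]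
      linarith
    · field_simp
  have hpqs : ∀ y, ∑ x, p x * q x y = 1 / (k : ℝ) := by
    intro y
    rw [Finset.sum_congr rfl fun x _ => hpq x y]
    exact hzs y
  refine ⟨p, z, fun c y m => Dec n (fun m' => q (c m') y) m, hp0, hp1, hz0, hzval, hpval,
    fun c y m => Dec_nonneg (fun m' => hq0 (c m') y) (fun m' => hq1 (c m') y) m,
    fun c y => Dec_sum _, ?_⟩
  intro x y m
  have := key_m k hk p (fun x => q x y) hp0 hp1 (fun x => hq0 x y) (fun x => hq1 x y)
    (hpqs y) m x
  rw [hpq x y] at this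
  exact this

end Pack

section MoreHelpers

lemma sum2_congr {A B : Type*} [Fintype A] [Fintype B] {f g : A → B → ℝ}
    (h : ∀ a b, f a b = g a b) : ∑ a, ∑ b, f a b = ∑ a, ∑ b, g a b :=
  Finset.sum_congr rfl fun a _ => Finset.sum_congr rfl fun b _ => h a b

lemma sum3_congr {A B C : Type*} [Fintype A] [Fintype B] [Fintype C] {f g : A → B → C → ℝ}
    (h : ∀ a b c, f a b c = g a b c) : ∑ a, ∑ b, ∑ c, f a b c = ∑ a, ∑ b, ∑ c, g a b c :=
  Finset.sum_congr rfl fun a _ => Finset.sum_congr rfl fun b _ =>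
    Finset.sum_congr rfl fun c _ => h a b c

lemma sum3_le {A B C : Type*} [Fintype A] [Fintype B] [Fintype C] {f g : A → B → C → ℝ}
    (h : ∀ a b c, f a b c ≤ g a b c) : ∑ a, ∑ b, ∑ c, f a b c ≤ ∑ a, ∑ b, ∑ c, g a b c :=
  Finset.sum_le_sum fun a _ => Finset.sum_le_sum fun b _ =>
    Finset.sum_le_sum fun c _ => h a b c

lemma sum5_congr {I1 I2 X1 X2 Y : Type*} [Fintype I1] [Fintype I2] [Fintype X1] [Fintype X2]
    [Fintype Y] {f g : I1 → I2 → X1 → X2 → Y → ℝ}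
    (h : ∀ i1 i2 x1 x2 y, f i1 i2 x1 x2 y = g i1 i2 x1 x2 y) :
    ∑ i1, ∑ i2, ∑ x1, ∑ x2, ∑ y, f i1 i2 x1 x2 y
      = ∑ i1, ∑ i2, ∑ x1, ∑ x2, ∑ y, g i1 i2 x1 x2 y :=
  Finset.sum_congr rfl fun i1 _ => Finset.sum_congr rfl fun i2 _ =>
    Finset.sum_congr rfl fun x1 _ => Finset.sum_congr rfl fun x2 _ =>
      Finset.sum_congr rfl fun y _ => h i1 i2 x1 x2 y

end MoreHelpers

section Defs

variable {X1 X2 Y : Type*}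

/-- `S_sum(W,ℓ1,ℓ2)`: maximum sum (averaged individual) success probability over
classical stochastic encoders and a pair of decoders. -/
noncomputable def Ssum [Fintype X1] [Fintype X2] [Fintype Y]
    (W : X1 → X2 → Y → ℝ) (k1 k2 : ℕ) : ℝ :=
  sSup {s : ℝ | ∃ (e1 : Fin k1 → X1 → ℝ) (e2 : Fin k2 → X2 → ℝ)
      (d1 : Y → Fin k1 → ℝ) (d2 : Y → Fin k2 → ℝ),
    (∀ i1 x1, 0 ≤ e1 i1 x1) ∧ (∀ i1, ∑ x1, e1 i1 x1 = 1) ∧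
    (∀ i2 x2, 0 ≤ e2 i2 x2) ∧ (∀ i2, ∑ x2, e2 i2 x2 = 1) ∧
    (∀ y j1, 0 ≤ d1 y j1) ∧ (∀ y, ∑ j1, d1 y j1 = 1) ∧
    (∀ y j2, 0 ≤ d2 y j2) ∧ (∀ y, ∑ j2, d2 y j2 = 1) ∧
    s = (1 / (2 * (k1 : ℝ) * (k2 : ℝ))) * ∑ i1, ∑ i2, ∑ x1, ∑ x2, ∑ y,
      W x1 x2 y * e1 i1 x1 * e2 i2 x2 * (d1 y i1 + d2 y i2)}

/-- A bipartite non-signaling box `P(x,j|i,y)` between one sender and the receiver,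
with `k` messages.  Arguments of `P` are in the order `x j i y`. -/
def IsNSBox1 {X Y : Type*} [Fintype X] [Fintype Y] (k : ℕ)
    (P : X → Fin k → Fin k → Y → ℝ) : Prop :=
  (∀ x j i y, 0 ≤ P x j i y) ∧
  (∀ i y, ∑ x, ∑ j, P x j i y = 1) ∧
  (∀ j i i' y, ∑ x, P x j i y = ∑ x, P x j i' y) ∧
  (∀ x i y y', ∑ j, P x j i y = ∑ j, P x j i y')

/-- `S_sum^{NS_SR}(W,k1,k2)`: maximum sum (averaged individual) success probability
with independent non-signaling assistance between each sender and the receiver. -/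
noncomputable def SNSsrSum [Fintype X1] [Fintype X2] [Fintype Y]
    (W : X1 → X2 → Y → ℝ) (k1 k2 : ℕ) : ℝ :=
  sSup {s : ℝ | ∃ (P1 : X1 → Fin k1 → Fin k1 → Y → ℝ) (P2 : X2 → Fin k2 → Fin k2 → Y → ℝ),
    IsNSBox1 k1 P1 ∧ IsNSBox1 k2 P2 ∧
    s = (1 / (2 * (k1 : ℝ) * (k2 : ℝ))) * ∑ i1, ∑ i2, ∑ x1, ∑ x2, ∑ y,
      W x1 x2 y *
        (P1 x1 i1 i1 y * ∑ j2, P2 x2 j2 i2 y + P2 x2 i2 i2 y * ∑ j1, P1 x1 j1 i1 y)}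

end Defs

section Core

lemma ssum_member_le_one {X1 X2 Y : Type*} [Fintype X1] [Fintype X2] [Fintype Y]
    (W : X1 → X2 → Y → ℝ) (hW0 : ∀ x1 x2 y, 0 ≤ W x1 x2 y)
    (hW1 : ∀ x1 x2, ∑ y, W x1 x2 y = 1) (l1 l2 : ℕ) (hl1 : 0 < l1) (hl2 : 0 < l2)
    (E1 : Fin l1 → X1 → ℝ) (E2 : Fin l2 → X2 → ℝ)
    (D1 : Y → Fin l1 → ℝ) (D2 : Y → Fin l2 → ℝ)
    (hE10 : ∀ i1 x1, 0 ≤ E1 i1 x1) (hE11 : ∀ i1, ∑ x1, E1 i1 x1 = 1)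
    (hE20 : ∀ i2 x2, 0 ≤ E2 i2 x2) (hE21 : ∀ i2, ∑ x2, E2 i2 x2 = 1)
    (hD10 : ∀ y j1, 0 ≤ D1 y j1) (hD11 : ∀ y, ∑ j1, D1 y j1 = 1)
    (hD20 : ∀ y j2, 0 ≤ D2 y j2) (hD21 : ∀ y, ∑ j2, D2 y j2 = 1) :
    (1 / (2 * (l1 : ℝ) * (l2 : ℝ))) * ∑ i1, ∑ i2, ∑ x1, ∑ x2, ∑ y,
      W x1 x2 y * E1 i1 x1 * E2 i2 x2 * (D1 y i1 + D2 y i2) ≤ 1 := by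
  have hl10 : (0 : ℝ) < l1 := by exact_mod_cast hl1
  have hl20 : (0 : ℝ) < l2 := by exact_mod_cast hl2
  have hterm : ∀ (i1 : Fin l1) (i2 : Fin l2),
      (∑ x1, ∑ x2, ∑ y, W x1 x2 y * E1 i1 x1 * E2 i2 x2 * (D1 y i1 + D2 y i2)) ≤ 2 := by
    intro i1 i2
    have hstep : (∑ x1, ∑ x2, ∑ y, W x1 x2 y * E1 i1 x1 * E2 i2 x2 * (D1 y i1 + D2 y i2))
        ≤ ∑ x1, ∑ x2, ∑ y, W x1 x2 y * E1 i1 x1 * E2 i2 x2 * 2 := by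
      refine sum3_le fun x1 x2 y => ?_
      have hd1 : D1 y i1 ≤ 1 := by
        rw [← hD11 y]
        exact Finset.single_le_sum (fun j _ => hD10 y j) (mem_univ i1)
      have hd2 : D2 y i2 ≤ 1 := by
        rw [← hD21 y]
        exact Finset.single_le_sum (fun j _ => hD20 y j) (mem_univ i2)
      have hnn : 0 ≤ W x1 x2 y * E1 i1 x1 * E2 i2 x2 :=
        mul_nonneg (mul_nonneg (hW0 x1 x2 y) (hE10 i1 x1)) (hE20 i2 x2)
      nlinarith
    refine le_trans hstep (le_of_eq ?_)
    have h3 : ∀ x1 x2 : _, (∑ y, W x1 x2 y * E1 i1 x1 * E2 i2 x2 * 2)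
        = E1 i1 x1 * (E2 i2 x2 * 2) := by
      intro x1 x2
      calc (∑ y, W x1 x2 y * E1 i1 x1 * E2 i2 x2 * 2)
          = ∑ y, (E1 i1 x1 * (E2 i2 x2 * 2)) * W x1 x2 y :=
            Finset.sum_congr rfl fun y _ => by ring
        _ = (E1 i1 x1 * (E2 i2 x2 * 2)) * ∑ y, W x1 x2 y := by rw [Finset.mul_sum]
        _ = E1 i1 x1 * (E2 i2 x2 * 2) := by rw [hW1, mul_one]
    rw [Finset.sum_congr rfl fun x1 _ => Finset.sum_congr rfl fun x2 _ => h3 x1 x2]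
    have h4 : ∀ x1, (∑ x2, E1 i1 x1 * (E2 i2 x2 * 2)) = E1 i1 x1 * 2 := by
      intro x1
      rw [← Finset.mul_sum, ← Finset.sum_mul, hE21, one_mul]
    rw [Finset.sum_congr rfl fun x1 _ => h4 x1, ← Finset.sum_mul, hE11, one_mul]
  have hsum : (∑ i1, ∑ i2, ∑ x1, ∑ x2, ∑ y,
      W x1 x2 y * E1 i1 x1 * E2 i2 x2 * (D1 y i1 + D2 y i2))
      ≤ (l1 : ℝ) * ((l2 : ℝ) * 2) := by
    calc (∑ i1, ∑ i2, ∑ x1, ∑ x2, ∑ y,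
        W x1 x2 y * E1 i1 x1 * E2 i2 x2 * (D1 y i1 + D2 y i2))
        ≤ ∑ _i1 : Fin l1, ∑ _i2 : Fin l2, (2 : ℝ) :=
          Finset.sum_le_sum fun i1 _ => Finset.sum_le_sum fun i2 _ => hterm i1 i2
      _ = (l1 : ℝ) * ((l2 : ℝ) * 2) := by
          simp [Finset.sum_const, Finset.card_univ, mul_assoc]
  calc (1 / (2 * (l1 : ℝ) * (l2 : ℝ))) * ∑ i1, ∑ i2, ∑ x1, ∑ x2, ∑ y,
      W x1 x2 y * E1 i1 x1 * E2 i2 x2 * (D1 y i1 + D2 y i2)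
      ≤ (1 / (2 * (l1 : ℝ) * (l2 : ℝ))) * ((l1 : ℝ) * ((l2 : ℝ) * 2)) :=
        mul_le_mul_of_nonneg_left hsum (by positivity)
    _ = 1 := by field_simp

set_option maxHeartbeats 2000000 in
lemma core {X1 X2 Y : Type*} [Fintype X1] [Fintype X2] [Fintype Y]
    [DecidableEq X1] [DecidableEq X2] [Nonempty Y]
    (W : X1 → X2 → Y → ℝ) (hW0 : ∀ x1 x2 y, 0 ≤ W x1 x2 y)
    (hW1 : ∀ x1 x2, ∑ y, W x1 x2 y = 1)
    (n1 n2 k1 k2 : ℕ) (hk1 : 0 < k1) (hk2 : 0 < k2)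
    (P1 : X1 → Fin k1 → Fin k1 → Y → ℝ) (P2 : X2 → Fin k2 → Fin k2 → Y → ℝ)
    (hP1 : IsNSBox1 k1 P1) (hP2 : IsNSBox1 k2 P2) :
    min ((k1 : ℝ) / ((n1 : ℝ) + 1) * (1 - (1 - 1 / (k1 : ℝ)) ^ (n1 + 1)))
        ((k2 : ℝ) / ((n2 : ℝ) + 1) * (1 - (1 - 1 / (k2 : ℝ)) ^ (n2 + 1)))
      * ((1 / (2 * (k1 : ℝ) * (k2 : ℝ))) * ∑ i1, ∑ i2, ∑ x1, ∑ x2, ∑ y,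
          W x1 x2 y * (P1 x1 i1 i1 y * ∑ j2, P2 x2 j2 i2 y
            + P2 x2 i2 i2 y * ∑ j1, P1 x1 j1 i1 y))
      ≤ Ssum W (n1 + 1) (n2 + 1) := by
  obtain ⟨hP10, hP11, hP13, hP14⟩ := hP1
  obtain ⟨hP20, hP21, hP23, hP24⟩ := hP2
  obtain ⟨p1, z1, d1, hp10, hp11, hz10, hz1val, hp1val, hd10, hd11, hkey1⟩ :=
    sender_pack hk1 P1 hP10 hP11 hP13 hP14 n1
  obtain ⟨p2, z2, d2, hp20, hp21, hz20, hz2val, hp2val, hd20, hd21, hkey2⟩ :=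
    sender_pack hk2 P2 hP20 hP21 hP23 hP24 n2
  have hk10 : (0 : ℝ) < k1 := by exact_mod_cast hk1
  have hk20 : (0 : ℝ) < k2 := by exact_mod_cast hk2
  have hn10 : (0 : ℝ) < ((n1 : ℝ) + 1) := by positivity
  have hn20 : (0 : ℝ) < ((n2 : ℝ) + 1) := by positivity
  set α1 : ℝ := (k1 : ℝ) / ((n1 : ℝ) + 1) * (1 - (1 - 1 / (k1 : ℝ)) ^ (n1 + 1)) with hα1def
  set α2 : ℝ := (k2 : ℝ) / ((n2 : ℝ) + 1) * (1 - (1 - 1 / (k2 : ℝ)) ^ (n2 + 1)) with hα2def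
  set μ : ℝ := min α1 α2 with hμdef
  have hone1 : (0 : ℝ) ≤ 1 - 1 / (k1 : ℝ) := by
    have : 1 / (k1 : ℝ) ≤ 1 := by
      rw [div_le_one hk10]; exact_mod_cast hk1
    linarith
  have hone2 : (0 : ℝ) ≤ 1 - 1 / (k2 : ℝ) := by
    have : 1 / (k2 : ℝ) ≤ 1 := by
      rw [div_le_one hk20]; exact_mod_cast hk2
    linarith
  have hα1nonneg : 0 ≤ α1 := by
    rw [hα1def]
    have := pow_le_one₀ hone1 (by nlinarith [one_div_pos.2 hk10] : (1 : ℝ) - 1 / (k1 : ℝ) ≤ 1)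
      (n := n1 + 1)
    have hd : (0 : ℝ) ≤ (k1 : ℝ) / ((n1 : ℝ) + 1) := by positivity
    nlinarith
  have hα2nonneg : 0 ≤ α2 := by
    rw [hα2def]
    have := pow_le_one₀ hone2 (by nlinarith [one_div_pos.2 hk20] : (1 : ℝ) - 1 / (k2 : ℝ) ≤ 1)
      (n := n2 + 1)
    have hd : (0 : ℝ) ≤ (k2 : ℝ) / ((n2 : ℝ) + 1) := by positivity
    nlinarith
  have hμ1 : μ ≤ α1 := min_le_left _ _
  have hμ2 : μ ≤ α2 := min_le_right _ _
  have hμ0 : 0 ≤ μ := le_min hα1nonneg hα2nonneg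
  set V : ℝ := (1 / (2 * (k1 : ℝ) * (k2 : ℝ))) * ∑ i1, ∑ i2, ∑ x1, ∑ x2, ∑ y,
      W x1 x2 y * (P1 x1 i1 i1 y * ∑ j2, P2 x2 j2 i2 y
        + P2 x2 i2 i2 y * ∑ j1, P1 x1 j1 i1 y) with hVdef
  set S1 : ℝ := ∑ x1, ∑ x2, ∑ y, W x1 x2 y * (z1 x1 y * p2 x2) with hS1def
  set S2 : ℝ := ∑ x1, ∑ x2, ∑ y, W x1 x2 y * (p1 x1 * z2 x2 y) with hS2def
  have hS1nonneg : 0 ≤ S1 := by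
    rw [hS1def]
    exact Finset.sum_nonneg fun x1 _ => Finset.sum_nonneg fun x2 _ =>
      Finset.sum_nonneg fun y _ => mul_nonneg (hW0 x1 x2 y)
        (mul_nonneg (hz10 x1 y) (hp20 x2))
  have hS2nonneg : 0 ≤ S2 := by
    rw [hS2def]
    exact Finset.sum_nonneg fun x1 _ => Finset.sum_nonneg fun x2 _ =>
      Finset.sum_nonneg fun y _ => mul_nonneg (hW0 x1 x2 y)
        (mul_nonneg (hp10 x1) (hz20 x2 y))
  -- value identity for the non-signaling value
  have hVal : V = (1 / 2) * (S1 + S2) := by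
    rw [hVdef]
    have hstep : (∑ i1 : Fin k1, ∑ i2 : Fin k2, ∑ x1, ∑ x2, ∑ y,
        W x1 x2 y * (P1 x1 i1 i1 y * ∑ j2, P2 x2 j2 i2 y
          + P2 x2 i2 i2 y * ∑ j1, P1 x1 j1 i1 y))
        = (k1 : ℝ) * (k2 : ℝ) * S1 + (k1 : ℝ) * (k2 : ℝ) * S2 := by
      calc (∑ i1 : Fin k1, ∑ i2 : Fin k2, ∑ x1, ∑ x2, ∑ y,
          W x1 x2 y * (P1 x1 i1 i1 y * ∑ j2, P2 x2 j2 i2 y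
            + P2 x2 i2 i2 y * ∑ j1, P1 x1 j1 i1 y))
          = ∑ i1 : Fin k1, ∑ i2 : Fin k2, ∑ x1, ∑ x2, ∑ y,
            (W x1 x2 y * (P1 x1 i1 i1 y * (∑ j2, P2 x2 j2 i2 y))
              + W x1 x2 y * ((∑ j1, P1 x1 j1 i1 y) * P2 x2 i2 i2 y)) :=
            sum5_congr fun i1 i2 x1 x2 y => by ring
        _ = (∑ i1 : Fin k1, ∑ i2 : Fin k2, ∑ x1, ∑ x2, ∑ y,
              W x1 x2 y * (P1 x1 i1 i1 y * (∑ j2, P2 x2 j2 i2 y)))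
            + ∑ i1 : Fin k1, ∑ i2 : Fin k2, ∑ x1, ∑ x2, ∑ y,
              W x1 x2 y * ((∑ j1, P1 x1 j1 i1 y) * P2 x2 i2 i2 y) := by
            simp only [Finset.sum_add_distrib]
        _ = (∑ x1, ∑ x2, ∑ y, W x1 x2 y *
              ((∑ i1, P1 x1 i1 i1 y) * (∑ i2, ∑ j2, P2 x2 j2 i2 y)))
            + ∑ x1, ∑ x2, ∑ y, W x1 x2 y *
              ((∑ i1, ∑ j1, P1 x1 j1 i1 y) * (∑ i2, P2 x2 i2 i2 y)) := by
            rw [sum5 W (fun i1 x1 y => P1 x1 i1 i1 y) (fun i2 x2 y => ∑ j2, P2 x2 j2 i2 y),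
              sum5 W (fun i1 x1 y => ∑ j1, P1 x1 j1 i1 y) (fun i2 x2 y => P2 x2 i2 i2 y)]
        _ = (∑ x1, ∑ x2, ∑ y, ((k1 : ℝ) * (k2 : ℝ)) * (W x1 x2 y * (z1 x1 y * p2 x2)))
            + ∑ x1, ∑ x2, ∑ y, ((k1 : ℝ) * (k2 : ℝ)) * (W x1 x2 y * (p1 x1 * z2 x2 y)) := by
            refine congrArg₂ (· + ·) (sum3_congr fun x1 x2 y => ?_)
              (sum3_congr fun x1 x2 y => ?_)
            · rw [hz1val x1 y, hp2val x2 y]; ring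
            · rw [hp1val x1 y, hz2val x2 y]; ring
        _ = (k1 : ℝ) * (k2 : ℝ) * S1 + (k1 : ℝ) * (k2 : ℝ) * S2 := by
            simp only [← Finset.mul_sum]
            rfl
    rw [hstep]
    field_simp
  -- the randomized classical code
  set v : (Fin (n1 + 1) → X1) → (Fin (n2 + 1) → X2) → ℝ := fun c1 c2 =>
    (1 / (2 * ((n1 + 1 : ℕ) : ℝ) * ((n2 + 1 : ℕ) : ℝ))) * ∑ m1, ∑ m2, ∑ x1, ∑ x2, ∑ y,
      W x1 x2 y * (if c1 m1 = x1 then 1 else 0) * (if c2 m2 = x2 then 1 else 0) *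
        (d1 c1 y m1 + d2 c2 y m2) with hvdef
  -- value identity for the classical code
  have hv : ∀ c1 c2, v c1 c2 = (1 / (2 * ((n1 + 1 : ℕ) : ℝ) * ((n2 + 1 : ℕ) : ℝ))) *
      ((∑ x1, ∑ x2, ∑ y, W x1 x2 y *
          ((∑ m1, (if c1 m1 = x1 then 1 else 0) * d1 c1 y m1)
            * (∑ m2, (if c2 m2 = x2 then (1 : ℝ) else 0))))
        + ∑ x1, ∑ x2, ∑ y, W x1 x2 y *
          ((∑ m1, (if c1 m1 = x1 then (1 : ℝ) else 0))
            * (∑ m2, (if c2 m2 = x2 then 1 else 0) * d2 c2 y m2))) := by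
    intro c1 c2
    rw [hvdef]
    dsimp only
    congr 1
    calc (∑ m1, ∑ m2, ∑ x1, ∑ x2, ∑ y,
        W x1 x2 y * (if c1 m1 = x1 then 1 else 0) * (if c2 m2 = x2 then 1 else 0) *
          (d1 c1 y m1 + d2 c2 y m2))
        = ∑ m1, ∑ m2, ∑ x1, ∑ x2, ∑ y,
          (W x1 x2 y * (((if c1 m1 = x1 then 1 else 0) * d1 c1 y m1)
              * (if c2 m2 = x2 then 1 else 0))
            + W x1 x2 y * ((if c1 m1 = x1 then 1 else 0)
              * ((if c2 m2 = x2 then 1 else 0) * d2 c2 y m2))) :=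
          sum5_congr fun m1 m2 x1 x2 y => by ring
      _ = (∑ m1, ∑ m2, ∑ x1, ∑ x2, ∑ y,
            W x1 x2 y * (((if c1 m1 = x1 then 1 else 0) * d1 c1 y m1)
              * (if c2 m2 = x2 then 1 else 0)))
          + ∑ m1, ∑ m2, ∑ x1, ∑ x2, ∑ y,
            W x1 x2 y * ((if c1 m1 = x1 then 1 else 0)
              * ((if c2 m2 = x2 then 1 else 0) * d2 c2 y m2)) := by
          simp only [Finset.sum_add_distrib]
      _ = (∑ x1, ∑ x2, ∑ y, W x1 x2 y *
            ((∑ m1, (if c1 m1 = x1 then 1 else 0) * d1 c1 y m1)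
              * (∑ m2, (if c2 m2 = x2 then (1 : ℝ) else 0))))
          + ∑ x1, ∑ x2, ∑ y, W x1 x2 y *
            ((∑ m1, (if c1 m1 = x1 then (1 : ℝ) else 0))
              * (∑ m2, (if c2 m2 = x2 then 1 else 0) * d2 c2 y m2)) := by
          rw [sum5 W (fun m1 x1 y => (if c1 m1 = x1 then 1 else 0) * d1 c1 y m1)
              (fun m2 x2 _y => (if c2 m2 = x2 then (1 : ℝ) else 0)),
            sum5 W (fun m1 x1 _y => (if c1 m1 = x1 then (1 : ℝ) else 0))
              (fun m2 x2 y => (if c2 m2 = x2 then 1 else 0) * d2 c2 y m2)]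
  -- expectations of encoder/decoder quantities
  have hEB2 : ∀ x2, (∑ c2 : Fin (n2 + 1) → X2,
      (∏ m', p2 (c2 m')) * ∑ m2, (if c2 m2 = x2 then (1 : ℝ) else 0))
      = ((n2 : ℝ) + 1) * p2 x2 := by
    intro x2
    calc (∑ c2 : Fin (n2 + 1) → X2,
        (∏ m', p2 (c2 m')) * ∑ m2, (if c2 m2 = x2 then (1 : ℝ) else 0))
        = ∑ c2 : Fin (n2 + 1) → X2, ∑ m2,
            (∏ m', p2 (c2 m')) * (if c2 m2 = x2 then (1 : ℝ) else 0) := by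
          simp only [Finset.mul_sum]
      _ = ∑ m2, ∑ c2 : Fin (n2 + 1) → X2,
            (∏ m', p2 (c2 m')) * (if c2 m2 = x2 then (1 : ℝ) else 0) := Finset.sum_comm
      _ = ∑ _m2 : Fin (n2 + 1), p2 x2 :=
          Finset.sum_congr rfl fun m2 _ => enc_exp p2 hp21 m2 x2
      _ = ((n2 : ℝ) + 1) * p2 x2 := by
          simp [Finset.sum_const, Finset.card_univ]
  have hEB1 : ∀ x1, (∑ c1 : Fin (n1 + 1) → X1,
      (∏ m', p1 (c1 m')) * ∑ m1, (if c1 m1 = x1 then (1 : ℝ) else 0))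
      = ((n1 : ℝ) + 1) * p1 x1 := by
    intro x1
    calc (∑ c1 : Fin (n1 + 1) → X1,
        (∏ m', p1 (c1 m')) * ∑ m1, (if c1 m1 = x1 then (1 : ℝ) else 0))
        = ∑ c1 : Fin (n1 + 1) → X1, ∑ m1,
            (∏ m', p1 (c1 m')) * (if c1 m1 = x1 then (1 : ℝ) else 0) := by
          simp only [Finset.mul_sum]
      _ = ∑ m1, ∑ c1 : Fin (n1 + 1) → X1,
            (∏ m', p1 (c1 m')) * (if c1 m1 = x1 then (1 : ℝ) else 0) := Finset.sum_comm
      _ = ∑ _m1 : Fin (n1 + 1), p1 x1 :=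
          Finset.sum_congr rfl fun m1 _ => enc_exp p1 hp11 m1 x1
      _ = ((n1 : ℝ) + 1) * p1 x1 := by
          simp [Finset.sum_const, Finset.card_univ]
  have hEA1 : ∀ x1 y, ((n1 : ℝ) + 1) * (α1 * z1 x1 y)
      ≤ ∑ c1 : Fin (n1 + 1) → X1,
        (∏ m', p1 (c1 m')) * ∑ m1, (if c1 m1 = x1 then 1 else 0) * d1 c1 y m1 := by
    intro x1 y
    have heq : (∑ c1 : Fin (n1 + 1) → X1,
        (∏ m', p1 (c1 m')) * ∑ m1, (if c1 m1 = x1 then 1 else 0) * d1 c1 y m1)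
        = ∑ m1, ∑ c1 : Fin (n1 + 1) → X1,
          (∏ m', p1 (c1 m')) * ((if c1 m1 = x1 then 1 else 0) * d1 c1 y m1) := by
      simp only [Finset.mul_sum]
      exact Finset.sum_comm
    rw [heq]
    have hbound : ∀ m1 : Fin (n1 + 1), α1 * z1 x1 y
        ≤ ∑ c1 : Fin (n1 + 1) → X1,
          (∏ m', p1 (c1 m')) * ((if c1 m1 = x1 then 1 else 0) * d1 c1 y m1) :=
      fun m1 => hkey1 x1 y m1
    calc ((n1 : ℝ) + 1) * (α1 * z1 x1 y)
        = ∑ _m1 : Fin (n1 + 1), α1 * z1 x1 y := by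
          simp [Finset.sum_const, Finset.card_univ]
      _ ≤ _ := Finset.sum_le_sum fun m1 _ => hbound m1
  have hEA2 : ∀ x2 y, ((n2 : ℝ) + 1) * (α2 * z2 x2 y)
      ≤ ∑ c2 : Fin (n2 + 1) → X2,
        (∏ m', p2 (c2 m')) * ∑ m2, (if c2 m2 = x2 then 1 else 0) * d2 c2 y m2 := by
    intro x2 y
    have heq : (∑ c2 : Fin (n2 + 1) → X2,
        (∏ m', p2 (c2 m')) * ∑ m2, (if c2 m2 = x2 then 1 else 0) * d2 c2 y m2)
        = ∑ m2, ∑ c2 : Fin (n2 + 1) → X2,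
          (∏ m', p2 (c2 m')) * ((if c2 m2 = x2 then 1 else 0) * d2 c2 y m2) := by
      simp only [Finset.mul_sum]
      exact Finset.sum_comm
    rw [heq]
    calc ((n2 : ℝ) + 1) * (α2 * z2 x2 y)
        = ∑ _m2 : Fin (n2 + 1), α2 * z2 x2 y := by
          simp [Finset.sum_const, Finset.card_univ]
      _ ≤ _ := Finset.sum_le_sum fun m2 _ => hkey2 x2 y m2
  -- the expected value of the random classical code
  set E : ℝ := ∑ c1 : Fin (n1 + 1) → X1, ∑ c2 : Fin (n2 + 1) → X2,
    (∏ m', p1 (c1 m')) * (∏ m', p2 (c2 m')) * v c1 c2 with hEdef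
  have hE : E = (1 / (2 * ((n1 + 1 : ℕ) : ℝ) * ((n2 + 1 : ℕ) : ℝ))) *
      ((∑ x1, ∑ x2, ∑ y, W x1 x2 y *
          ((∑ c1 : Fin (n1 + 1) → X1, (∏ m', p1 (c1 m')) *
              ∑ m1, (if c1 m1 = x1 then 1 else 0) * d1 c1 y m1)
            * (((n2 : ℝ) + 1) * p2 x2)))
        + ∑ x1, ∑ x2, ∑ y, W x1 x2 y *
          ((((n1 : ℝ) + 1) * p1 x1)
            * (∑ c2 : Fin (n2 + 1) → X2, (∏ m', p2 (c2 m')) *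
              ∑ m2, (if c2 m2 = x2 then 1 else 0) * d2 c2 y m2))) := by
    have hsumE1 := sumE (fun c1 : Fin (n1 + 1) → X1 => ∏ m', p1 (c1 m'))
      (fun c2 : Fin (n2 + 1) → X2 => ∏ m', p2 (c2 m')) W
      (fun c1 x1 y => ∑ m1, (if c1 m1 = x1 then 1 else 0) * d1 c1 y m1)
      (fun c2 x2 _y => ∑ m2, (if c2 m2 = x2 then (1 : ℝ) else 0))
    have hsumE2 := sumE (fun c1 : Fin (n1 + 1) → X1 => ∏ m', p1 (c1 m'))
      (fun c2 : Fin (n2 + 1) → X2 => ∏ m', p2 (c2 m')) W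
      (fun c1 x1 _y => ∑ m1, (if c1 m1 = x1 then (1 : ℝ) else 0))
      (fun c2 x2 y => ∑ m2, (if c2 m2 = x2 then 1 else 0) * d2 c2 y m2)
    beta_reduce at hsumE1 hsumE2
    rw [hEdef]
    have hsplit : (∑ c1 : Fin (n1 + 1) → X1, ∑ c2 : Fin (n2 + 1) → X2,
        (∏ m', p1 (c1 m')) * (∏ m', p2 (c2 m')) * v c1 c2)
        = (1 / (2 * ((n1 + 1 : ℕ) : ℝ) * ((n2 + 1 : ℕ) : ℝ))) *
          ((∑ c1 : Fin (n1 + 1) → X1, ∑ c2 : Fin (n2 + 1) → X2,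
            (∏ m', p1 (c1 m')) * (∏ m', p2 (c2 m')) *
              (∑ x1, ∑ x2, ∑ y, W x1 x2 y *
                ((∑ m1, (if c1 m1 = x1 then 1 else 0) * d1 c1 y m1)
                  * (∑ m2, (if c2 m2 = x2 then (1 : ℝ) else 0)))))
          + ∑ c1 : Fin (n1 + 1) → X1, ∑ c2 : Fin (n2 + 1) → X2,
            (∏ m', p1 (c1 m')) * (∏ m', p2 (c2 m')) *
              (∑ x1, ∑ x2, ∑ y, W x1 x2 y *
                ((∑ m1, (if c1 m1 = x1 then (1 : ℝ) else 0))
                  * (∑ m2, (if c2 m2 = x2 then 1 else 0) * d2 c2 y m2)))) := by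
      have h1 : ∀ (c1 : Fin (n1 + 1) → X1) (c2 : Fin (n2 + 1) → X2),
          (∏ m', p1 (c1 m')) * (∏ m', p2 (c2 m')) * v c1 c2
          = (1 / (2 * ((n1 + 1 : ℕ) : ℝ) * ((n2 + 1 : ℕ) : ℝ))) *
              ((∏ m', p1 (c1 m')) * (∏ m', p2 (c2 m')) *
                (∑ x1, ∑ x2, ∑ y, W x1 x2 y *
                  ((∑ m1, (if c1 m1 = x1 then 1 else 0) * d1 c1 y m1)
                    * (∑ m2, (if c2 m2 = x2 then (1 : ℝ) else 0)))))
            + (1 / (2 * ((n1 + 1 : ℕ) : ℝ) * ((n2 + 1 : ℕ) : ℝ))) *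
              ((∏ m', p1 (c1 m')) * (∏ m', p2 (c2 m')) *
                (∑ x1, ∑ x2, ∑ y, W x1 x2 y *
                  ((∑ m1, (if c1 m1 = x1 then (1 : ℝ) else 0))
                    * (∑ m2, (if c2 m2 = x2 then 1 else 0) * d2 c2 y m2)))) :=
        fun c1 c2 => by rw [hv c1 c2]; ring
      rw [Finset.sum_congr rfl fun c1 _ => Finset.sum_congr rfl fun c2 _ => h1 c1 c2]
      simp only [Finset.sum_add_distrib, ← Finset.mul_sum]
      rw [mul_add]
    rw [hsplit, hsumE1, hsumE2]
    congr 1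
    refine congrArg₂ (· + ·) (sum3_congr fun x1 x2 y => ?_) (sum3_congr fun x1 x2 y => ?_)
    · rw [hEB2 x2]
    · rw [hEB1 x1]
  -- lower bound on the expected value
  have hlow : μ * V ≤ E := by
    have hQ1 : ((n1 : ℝ) + 1) * ((n2 : ℝ) + 1) * α1 * S1
        ≤ ∑ x1, ∑ x2, ∑ y, W x1 x2 y *
          ((∑ c1 : Fin (n1 + 1) → X1, (∏ m', p1 (c1 m')) *
              ∑ m1, (if c1 m1 = x1 then 1 else 0) * d1 c1 y m1)
            * (((n2 : ℝ) + 1) * p2 x2)) := by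
      have h1 : ((n1 : ℝ) + 1) * ((n2 : ℝ) + 1) * α1 * S1
          = ∑ x1, ∑ x2, ∑ y, W x1 x2 y *
            ((((n1 : ℝ) + 1) * (α1 * z1 x1 y)) * (((n2 : ℝ) + 1) * p2 x2)) := by
        rw [hS1def, Finset.mul_sum]
        refine Finset.sum_congr rfl fun x1 _ => ?_
        rw [Finset.mul_sum]
        refine Finset.sum_congr rfl fun x2 _ => ?_
        rw [Finset.mul_sum]
        exact Finset.sum_congr rfl fun y _ => by ring
      rw [h1]
      refine sum3_le fun x1 x2 y => ?_
      refine mul_le_mul_of_nonneg_left ?_ (hW0 x1 x2 y)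
      refine mul_le_mul_of_nonneg_right (hEA1 x1 y) ?_
      exact mul_nonneg (by positivity) (hp20 x2)
    have hQ2 : ((n1 : ℝ) + 1) * ((n2 : ℝ) + 1) * α2 * S2
        ≤ ∑ x1, ∑ x2, ∑ y, W x1 x2 y *
          ((((n1 : ℝ) + 1) * p1 x1)
            * (∑ c2 : Fin (n2 + 1) → X2, (∏ m', p2 (c2 m')) *
              ∑ m2, (if c2 m2 = x2 then 1 else 0) * d2 c2 y m2)) := by
      have h1 : ((n1 : ℝ) + 1) * ((n2 : ℝ) + 1) * α2 * S2
          = ∑ x1, ∑ x2, ∑ y, W x1 x2 y *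
            ((((n1 : ℝ) + 1) * p1 x1) * (((n2 : ℝ) + 1) * (α2 * z2 x2 y))) := by
        rw [hS2def, Finset.mul_sum]
        refine Finset.sum_congr rfl fun x1 _ => ?_
        rw [Finset.mul_sum]
        refine Finset.sum_congr rfl fun x2 _ => ?_
        rw [Finset.mul_sum]
        exact Finset.sum_congr rfl fun y _ => by ring
      rw [h1]
      refine sum3_le fun x1 x2 y => ?_
      refine mul_le_mul_of_nonneg_left ?_ (hW0 x1 x2 y)
      refine mul_le_mul_of_nonneg_left (hEA2 x2 y) ?_
      exact mul_nonneg (by positivity) (hp10 x1)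
    have hcast1 : ((n1 + 1 : ℕ) : ℝ) = (n1 : ℝ) + 1 := by push_cast; ring
    have hcast2 : ((n2 + 1 : ℕ) : ℝ) = (n2 : ℝ) + 1 := by push_cast; ring
    calc μ * V = μ * ((1 / 2) * (S1 + S2)) := by rw [hVal]
      _ ≤ (1 / 2) * (α1 * S1 + α2 * S2) := by
          have h1 : μ * S1 ≤ α1 * S1 := mul_le_mul_of_nonneg_right hμ1 hS1nonneg
          have h2 : μ * S2 ≤ α2 * S2 := mul_le_mul_of_nonneg_right hμ2 hS2nonneg
          have h3 : μ * ((1 / 2) * (S1 + S2)) = (1 / 2) * (μ * S1) + (1 / 2) * (μ * S2) := by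
            ring
          rw [h3]
          linarith
      _ = (1 / (2 * ((n1 + 1 : ℕ) : ℝ) * ((n2 + 1 : ℕ) : ℝ))) *
          (((n1 : ℝ) + 1) * ((n2 : ℝ) + 1) * α1 * S1
            + ((n1 : ℝ) + 1) * ((n2 : ℝ) + 1) * α2 * S2) := by
          rw [hcast1, hcast2]
          field_simp
      _ ≤ E := by
          rw [hE]
          refine mul_le_mul_of_nonneg_left (add_le_add hQ1 hQ2) ?_
          rw [hcast1, hcast2]
          positivity
  -- averaging: there is a good realization
  have hw1sum : (∑ c1 : Fin (n1 + 1) → X1, ∏ m', p1 (c1 m')) = 1 := by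
    rw [sum_fn_prod (fun _ x => p1 x)]
    simp [hp11]
  have hw2sum : (∑ c2 : Fin (n2 + 1) → X2, ∏ m', p2 (c2 m')) = 1 := by
    rw [sum_fn_prod (fun _ x => p2 x)]
    simp [hp21]
  have hwtot : (∑ pc : (Fin (n1 + 1) → X1) × (Fin (n2 + 1) → X2),
      (∏ m', p1 (pc.1 m')) * (∏ m', p2 (pc.2 m'))) = 1 := by
    rw [Fintype.sum_prod_type]
    calc (∑ c1 : Fin (n1 + 1) → X1, ∑ c2 : Fin (n2 + 1) → X2,
        (∏ m', p1 (c1 m')) * (∏ m', p2 (c2 m')))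
        = ∑ c1 : Fin (n1 + 1) → X1, (∏ m', p1 (c1 m')) *
            ∑ c2 : Fin (n2 + 1) → X2, (∏ m', p2 (c2 m')) :=
          Finset.sum_congr rfl fun c1 _ => by rw [← Finset.mul_sum]
      _ = 1 := by rw [hw2sum]; simp [hw1sum]
  have hEeq : (∑ pc : (Fin (n1 + 1) → X1) × (Fin (n2 + 1) → X2),
      ((∏ m', p1 (pc.1 m')) * (∏ m', p2 (pc.2 m'))) * v pc.1 pc.2) = E := by
    rw [hEdef, Fintype.sum_prod_type]
  obtain ⟨pc, hpc⟩ := exists_ge_of_le_wsum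
    (fun pc : (Fin (n1 + 1) → X1) × (Fin (n2 + 1) → X2) =>
      (∏ m', p1 (pc.1 m')) * (∏ m', p2 (pc.2 m')))
    (fun pc => v pc.1 pc.2)
    (fun pc => mul_nonneg (Finset.prod_nonneg fun m' _ => hp10 (pc.1 m'))
      (Finset.prod_nonneg fun m' _ => hp20 (pc.2 m')))
    hwtot (μ * V) (by rw [hEeq]; exact hlow)
  refine le_trans hpc ?_
  -- the realized code is a feasible classical code
  unfold Ssum
  refine le_csSup ⟨1, fun s hs => ?_⟩ ?_
  · obtain ⟨E1, E2, D1, D2, hE10, hE11, hE20, hE21, hD10, hD11, hD20, hD21, rfl⟩ := hs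
    exact ssum_member_le_one W hW0 hW1 (n1 + 1) (n2 + 1) (Nat.succ_pos n1) (Nat.succ_pos n2)
      E1 E2 D1 D2 hE10 hE11 hE20 hE21 hD10 hD11 hD20 hD21
  · refine ⟨fun m x => if pc.1 m = x then 1 else 0, fun m x => if pc.2 m = x then 1 else 0,
      d1 pc.1, d2 pc.2, ?_, ?_, ?_, ?_, fun y m => hd10 pc.1 y m, fun y => hd11 pc.1 y,
      fun y m => hd20 pc.2 y m, fun y => hd21 pc.2 y, ?_⟩
    · intro i x; by_cases h : pc.1 i = x <;> simp [h]
    · intro i; simp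
    · intro i x; by_cases h : pc.2 i = x <;> simp [h]
    · intro i; simp
    · rw [hvdef]

end Core

/-- Quantitative comparison between independent non-signaling assisted codes and
classical codes:
`min((k1/ℓ1)(1−(1−1/k1)^{ℓ1}), (k2/ℓ2)(1−(1−1/k2)^{ℓ2})) ⋅ S_sum^{NS_SR}(W,k1,k2)
  ≤ S_sum(W,ℓ1,ℓ2)`. -/
theorem SsumNSsr_le_Ssum {X1 X2 Y : Type*} [Fintype X1] [Fintype X2] [Fintype Y]
    (W : X1 → X2 → Y → ℝ)
    (hW0 : ∀ x1 x2 y, 0 ≤ W x1 x2 y)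
    (hW1 : ∀ x1 x2, ∑ y, W x1 x2 y = 1)
    (ℓ1 k1 ℓ2 k2 : ℕ) (hℓ1 : 0 < ℓ1) (hk1 : 0 < k1) (hℓ2 : 0 < ℓ2) (hk2 : 0 < k2) :
    min (((k1 : ℝ) / (ℓ1 : ℝ)) * (1 - (1 - 1 / (k1 : ℝ)) ^ ℓ1))
        (((k2 : ℝ) / (ℓ2 : ℝ)) * (1 - (1 - 1 / (k2 : ℝ)) ^ ℓ2))
      * SNSsrSum W k1 k2 ≤ Ssum W ℓ1 ℓ2 := by
  classical
  obtain ⟨n1, rfl⟩ : ∃ n, ℓ1 = n + 1 := ⟨ℓ1 - 1, (Nat.succ_pred_eq_of_pos hℓ1).symm⟩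
  obtain ⟨n2, rfl⟩ : ∃ n, ℓ2 = n + 1 := ⟨ℓ2 - 1, (Nat.succ_pred_eq_of_pos hℓ2).symm⟩
  have hk10 : (0 : ℝ) < k1 := by exact_mod_cast hk1
  have hk20 : (0 : ℝ) < k2 := by exact_mod_cast hk2
  have hcast1 : ((n1 + 1 : ℕ) : ℝ) = (n1 : ℝ) + 1 := by push_cast; ring
  have hcast2 : ((n2 + 1 : ℕ) : ℝ) = (n2 : ℝ) + 1 := by push_cast; ring
  rw [hcast1, hcast2]
  set α1 : ℝ := (k1 : ℝ) / ((n1 : ℝ) + 1) * (1 - (1 - 1 / (k1 : ℝ)) ^ (n1 + 1)) with hα1def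
  set α2 : ℝ := (k2 : ℝ) / ((n2 : ℝ) + 1) * (1 - (1 - 1 / (k2 : ℝ)) ^ (n2 + 1)) with hα2def
  set μ : ℝ := min α1 α2 with hμdef
  have hone1 : (0 : ℝ) ≤ 1 - 1 / (k1 : ℝ) := by
    have : 1 / (k1 : ℝ) ≤ 1 := by
      rw [div_le_one hk10]; exact_mod_cast hk1
    linarith
  have hone2 : (0 : ℝ) ≤ 1 - 1 / (k2 : ℝ) := by
    have : 1 / (k2 : ℝ) ≤ 1 := by
      rw [div_le_one hk20]; exact_mod_cast hk2
    linarith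
  have hlt1 : (1 : ℝ) - 1 / (k1 : ℝ) < 1 := by
    have := one_div_pos.2 hk10; linarith
  have hlt2 : (1 : ℝ) - 1 / (k2 : ℝ) < 1 := by
    have := one_div_pos.2 hk20; linarith
  have hα1nonneg : 0 ≤ α1 := by
    rw [hα1def]
    have := pow_le_one₀ hone1 (le_of_lt hlt1) (n := n1 + 1)
    have hd : (0 : ℝ) ≤ (k1 : ℝ) / ((n1 : ℝ) + 1) := by positivity
    nlinarith
  have hα2nonneg : 0 ≤ α2 := by
    rw [hα2def]
    have := pow_le_one₀ hone2 (le_of_lt hlt2) (n := n2 + 1)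
    have hd : (0 : ℝ) ≤ (k2 : ℝ) / ((n2 : ℝ) + 1) := by positivity
    nlinarith
  have hμ0 : 0 ≤ μ := le_min hα1nonneg hα2nonneg
  by_cases hX1 : Nonempty X1
  · by_cases hX2 : Nonempty X2
    · by_cases hY : Nonempty Y
      · -- main case: everything nonempty
        have hμpos : 0 < μ := by
          have h1 : (1 - 1 / (k1 : ℝ)) ^ (n1 + 1) < 1 :=
            pow_lt_one₀ hone1 hlt1 (Nat.succ_ne_zero n1)
          have h2 : (1 - 1 / (k2 : ℝ)) ^ (n2 + 1) < 1 :=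
            pow_lt_one₀ hone2 hlt2 (Nat.succ_ne_zero n2)
          refine lt_min ?_ ?_
          · rw [hα1def]
            have : (0 : ℝ) < (k1 : ℝ) / ((n1 : ℝ) + 1) := by positivity
            nlinarith
          · rw [hα2def]
            have : (0 : ℝ) < (k2 : ℝ) / ((n2 : ℝ) + 1) := by positivity
            nlinarith
        have hbdd : BddAbove {s : ℝ | ∃ (e1 : Fin (n1 + 1) → X1 → ℝ) (e2 : Fin (n2 + 1) → X2 → ℝ)
            (d1 : Y → Fin (n1 + 1) → ℝ) (d2 : Y → Fin (n2 + 1) → ℝ),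
            (∀ i1 x1, 0 ≤ e1 i1 x1) ∧ (∀ i1, ∑ x1, e1 i1 x1 = 1) ∧
            (∀ i2 x2, 0 ≤ e2 i2 x2) ∧ (∀ i2, ∑ x2, e2 i2 x2 = 1) ∧
            (∀ y j1, 0 ≤ d1 y j1) ∧ (∀ y, ∑ j1, d1 y j1 = 1) ∧
            (∀ y j2, 0 ≤ d2 y j2) ∧ (∀ y, ∑ j2, d2 y j2 = 1) ∧
            s = (1 / (2 * ((n1 + 1 : ℕ) : ℝ) * ((n2 + 1 : ℕ) : ℝ))) *
              ∑ i1, ∑ i2, ∑ x1, ∑ x2, ∑ y,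
                W x1 x2 y * e1 i1 x1 * e2 i2 x2 * (d1 y i1 + d2 y i2)} := by
          refine ⟨1, fun s hs => ?_⟩
          obtain ⟨E1, E2, D1, D2, hE10, hE11, hE20, hE21, hD10, hD11, hD20, hD21, rfl⟩ := hs
          exact ssum_member_le_one W hW0 hW1 (n1 + 1) (n2 + 1) (Nat.succ_pos n1)
            (Nat.succ_pos n2) E1 E2 D1 D2 hE10 hE11 hE20 hE21 hD10 hD11 hD20 hD21
        have hSsum0 : 0 ≤ Ssum W (n1 + 1) (n2 + 1) := by
          have hc1 : (0 : ℝ) < (Fintype.card X1 : ℝ) := by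
            exact_mod_cast Fintype.card_pos
          have hc2 : (0 : ℝ) < (Fintype.card X2 : ℝ) := by
            exact_mod_cast Fintype.card_pos
          set s0 : ℝ := (1 / (2 * ((n1 + 1 : ℕ) : ℝ) * ((n2 + 1 : ℕ) : ℝ))) *
            ∑ i1 : Fin (n1 + 1), ∑ i2 : Fin (n2 + 1), ∑ x1, ∑ x2, ∑ y,
              W x1 x2 y * (Fintype.card X1 : ℝ)⁻¹ * (Fintype.card X2 : ℝ)⁻¹ *
                (((n1 + 1 : ℕ) : ℝ)⁻¹ + ((n2 + 1 : ℕ) : ℝ)⁻¹) with hs0def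
          have hmem : s0 ∈ {s : ℝ | ∃ (e1 : Fin (n1 + 1) → X1 → ℝ)
              (e2 : Fin (n2 + 1) → X2 → ℝ)
              (d1 : Y → Fin (n1 + 1) → ℝ) (d2 : Y → Fin (n2 + 1) → ℝ),
              (∀ i1 x1, 0 ≤ e1 i1 x1) ∧ (∀ i1, ∑ x1, e1 i1 x1 = 1) ∧
              (∀ i2 x2, 0 ≤ e2 i2 x2) ∧ (∀ i2, ∑ x2, e2 i2 x2 = 1) ∧
              (∀ y j1, 0 ≤ d1 y j1) ∧ (∀ y, ∑ j1, d1 y j1 = 1) ∧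
              (∀ y j2, 0 ≤ d2 y j2) ∧ (∀ y, ∑ j2, d2 y j2 = 1) ∧
              s = (1 / (2 * ((n1 + 1 : ℕ) : ℝ) * ((n2 + 1 : ℕ) : ℝ))) *
                ∑ i1, ∑ i2, ∑ x1, ∑ x2, ∑ y,
                  W x1 x2 y * e1 i1 x1 * e2 i2 x2 * (d1 y i1 + d2 y i2)} := by
            refine ⟨fun _ _ => (Fintype.card X1 : ℝ)⁻¹, fun _ _ => (Fintype.card X2 : ℝ)⁻¹,
              fun _ _ => ((n1 + 1 : ℕ) : ℝ)⁻¹, fun _ _ => ((n2 + 1 : ℕ) : ℝ)⁻¹,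
              fun _ _ => by positivity, ?_, fun _ _ => by positivity, ?_,
              fun _ _ => by positivity, ?_, fun _ _ => by positivity, ?_, ?_⟩
            · intro i1
              rw [Finset.sum_const, Finset.card_univ, nsmul_eq_mul,
                mul_inv_cancel₀ (ne_of_gt hc1)]
            · intro i2
              rw [Finset.sum_const, Finset.card_univ, nsmul_eq_mul,
                mul_inv_cancel₀ (ne_of_gt hc2)]
            · intro y
              rw [Finset.sum_const, Finset.card_univ, Fintype.card_fin, nsmul_eq_mul,
                mul_inv_cancel₀ (by positivity)]
            · intro y
              rw [Finset.sum_const, Finset.card_univ, Fintype.card_fin, nsmul_eq_mul,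
                mul_inv_cancel₀ (by positivity)]
            · rw [hs0def]
          have hs0nn : 0 ≤ s0 := by
            rw [hs0def]
            refine mul_nonneg (by positivity) ?_
            refine Finset.sum_nonneg fun i1 _ => Finset.sum_nonneg fun i2 _ =>
              Finset.sum_nonneg fun x1 _ => Finset.sum_nonneg fun x2 _ =>
              Finset.sum_nonneg fun y _ => ?_
            refine mul_nonneg (mul_nonneg (mul_nonneg (hW0 x1 x2 y) ?_) ?_) ?_ <;> positivity
          exact le_trans hs0nn (le_csSup hbdd hmem)
        have hub : SNSsrSum W k1 k2 ≤ Ssum W (n1 + 1) (n2 + 1) / μ := by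
          unfold SNSsrSum
          refine Real.sSup_le (fun s hs => ?_) (div_nonneg hSsum0 hμ0)
          obtain ⟨P1, P2, hP1, hP2, rfl⟩ := hs
          rw [le_div_iff₀ hμpos, mul_comm]
          exact core W hW0 hW1 n1 n2 k1 k2 hk1 hk2 P1 P2 hP1 hP2
        calc μ * SNSsrSum W k1 k2 ≤ μ * (Ssum W (n1 + 1) (n2 + 1) / μ) :=
              mul_le_mul_of_nonneg_left hub hμ0
          _ = Ssum W (n1 + 1) (n2 + 1) := by field_simp
      · -- Y empty: contradiction with hW1
        exfalso
        have hIE : IsEmpty Y := not_nonempty_iff.mp hY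
        have h := hW1 (Classical.arbitrary X1) (Classical.arbitrary X2)
        rw [Finset.univ_eq_empty, Finset.sum_empty] at h
        norm_num at h
    · -- X2 empty
      have hIE : IsEmpty X2 := not_nonempty_iff.mp hX2
      have hS : Ssum W (n1 + 1) (n2 + 1) = 0 := by
        unfold Ssum
        convert Real.sSup_empty using 2
        rw [Set.eq_empty_iff_forall_notMem]
        rintro s ⟨e1, e2, d1, d2, _, _, _, he21, _⟩
        have h := he21 ⟨0, Nat.succ_pos n2⟩
        rw [Finset.univ_eq_empty, Finset.sum_empty] at h
        norm_num at h
      rw [hS]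
      have hB : SNSsrSum W k1 k2 ≤ 0 := by
        unfold SNSsrSum
        refine Real.sSup_le (fun s hs => ?_) le_rfl
        obtain ⟨P1, P2, hP1, hP2, rfl⟩ := hs
        have hz : ∀ (i1 : Fin k1) (i2 : Fin k2) (x1 : X1),
            (∑ x2 : X2, ∑ y, W x1 x2 y *
              (P1 x1 i1 i1 y * ∑ j2, P2 x2 j2 i2 y
                + P2 x2 i2 i2 y * ∑ j1, P1 x1 j1 i1 y)) = 0 := by
          intro i1 i2 x1
          rw [Finset.univ_eq_empty, Finset.sum_empty]
        simp only [hz, Finset.sum_const_zero, mul_zero, le_refl]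
      calc μ * SNSsrSum W k1 k2 ≤ μ * 0 := mul_le_mul_of_nonneg_left hB hμ0
        _ = 0 := mul_zero μ
  · -- X1 empty
    have hIE : IsEmpty X1 := not_nonempty_iff.mp hX1
    have hS : Ssum W (n1 + 1) (n2 + 1) = 0 := by
      unfold Ssum
      convert Real.sSup_empty using 2
      rw [Set.eq_empty_iff_forall_notMem]
      rintro s ⟨e1, e2, d1, d2, _, he11, _⟩
      have h := he11 ⟨0, Nat.succ_pos n1⟩
      rw [Finset.univ_eq_empty, Finset.sum_empty] at h
      norm_num at h
    rw [hS]
    have hB : SNSsrSum W k1 k2 ≤ 0 := by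
      unfold SNSsrSum
      refine Real.sSup_le (fun s hs => ?_) le_rfl
      obtain ⟨P1, P2, hP1, hP2, rfl⟩ := hs
      have hz : ∀ (i1 : Fin k1) (i2 : Fin k2),
          (∑ x1 : X1, ∑ x2 : X2, ∑ y, W x1 x2 y *
            (P1 x1 i1 i1 y * ∑ j2, P2 x2 j2 i2 y
              + P2 x2 i2 i2 y * ∑ j1, P1 x1 j1 i1 y)) = 0 := by
        intro i1 i2
        rw [Finset.univ_eq_empty, Finset.sum_empty]
      simp only [hz, Finset.sum_const_zero, mul_zero, le_refl]
    calc μ * SNSsrSum W k1 k2 ≤ μ * 0 := mul_le_mul_of_nonneg_left hB hμ0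
      _ = 0 := mul_zero μ
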